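/- arXiv:0905.2997 — 2 statements merged into one kernel-verified Lean document; each statement's English description precedes it below -/
import Mathlib

section
/- Let S ⊆ H with |S| > 1 and h_0 ∈ S with π_S(h_0) > 1/2, and let R = S \ {h_0}. If questions q_j and q_i satisfy Δ_j(S, π_S)/c_j ≥ Δ_i(S, π_S)/c_i, then 2·δ_j/c_j ≥ δ_i/c_i. -/
open Finset

namespace ActiveLearning

variable {H A : Type*} {m : ℕ}

/-- The total mass of a weight function `v` on a finite set `S`. -/
def mass (v : H → ℝ) (S : Finset H) : ℝ := ∑ s ∈ S, v s

/-- `v` restricted to `S` and normalized. -/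
noncomputable def restrict [DecidableEq H] (v : H → ℝ) (S : Finset H) : H → ℝ :=
  fun h => if h ∈ S then v h / mass v S else 0

/-- The shrinkage `Δ` of a question `qi` on `(S, v)`. -/
noncomputable def shrink [Fintype A] [DecidableEq A] (qi : H → A)
    (S : Finset H) (v : H → ℝ) : ℝ :=
  mass v S - ∑ j : A, (mass v (S.filter fun s => qi s = j)) ^ 2 / mass v S

/-- The collision probability of a distribution `v`. -/
def CP [Fintype H] (v : H → ℝ) : ℝ := ∑ z : H, (v z) ^ 2

/-- Query trees: internal nodes are questions (indexed by `Fin m`), branches are answers,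
leaves are hypotheses. -/
inductive QTree (m : ℕ) (H A : Type*) : Type _
  | leaf : H → QTree m H A
  | node : Fin m → (A → QTree m H A) → QTree m H A

/-- Follow the answers of hypothesis `h` down the tree, returning the leaf reached. -/
def follow (q : Fin m → H → A) : QTree m H A → H → H
  | .leaf h', _ => h'
  | .node i ch, h => follow q (ch (q i h)) h

/-- The cost `c_T(h)`: sum of costs of the questions on the root-to-`h` path. -/
def pathCost (q : Fin m → H → A) (c : Fin m → ℝ) : QTree m H A → H → ℝ
  | .leaf _, _ => 0
  | .node i ch, h => c i + pathCost q c (ch (q i h)) h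

/-- The leaves of `T` include `S`: every `h ∈ S` is identified by `T`. -/
def ValidOn (q : Fin m → H → A) (T : QTree m H A) (S : Finset H) : Prop :=
  ∀ h ∈ S, follow q T h = h

/-- The expected cost `C(T, v)` of a query tree `T` under weights `v`. -/
noncomputable def treeCost [Fintype H] (q : Fin m → H → A) (c : Fin m → ℝ)
    (T : QTree m H A) (v : H → ℝ) : ℝ :=
  ∑ h : H, v h * pathCost q c T h

/-- The questions asked along the root-to-`h` path. -/
def pathQs (q : Fin m → H → A) : QTree m H A → H → List (Fin m)
  | .leaf _, _ => []
  | .node i ch, h => i :: pathQs q (ch (q i h)) h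

/-- `T` is a greedy query tree for `π` on version space `S`: at every node it asks a question
maximizing the shrinkage-cost ratio and recurses on each nonempty answer class. -/
inductive IsGreedy [Fintype A] [DecidableEq A] [DecidableEq H]
    (q : Fin m → H → A) (c : Fin m → ℝ) (π : H → ℝ) :
    QTree m H A → Finset H → Prop
  | leaf (h : H) : IsGreedy q c π (.leaf h) {h}
  | node (S : Finset H) (i : Fin m) (ch : A → QTree m H A)
      (hcard : 1 < S.card)
      (hmax : ∀ j : Fin m,
        shrink (q j) S (restrict π S) / c j ≤ shrink (q i) S (restrict π S) / c i)
      (hch : ∀ a : A, (S.filter fun s => q i s = a).Nonempty →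
        IsGreedy q c π (ch a) (S.filter fun s => q i s = a)) :
      IsGreedy q c π (.node i ch) S

/-- `T` is an `ε`-approximate greedy query tree for `π` on version space `S`. -/
inductive IsApproxGreedy [Fintype A] [DecidableEq A] [DecidableEq H]
    (ε : ℝ) (q : Fin m → H → A) (c : Fin m → ℝ) (π : H → ℝ) :
    QTree m H A → Finset H → Prop
  | leaf (h : H) : IsApproxGreedy ε q c π (.leaf h) {h}
  | node (S : Finset H) (i : Fin m) (ch : A → QTree m H A)
      (hcard : 1 < S.card)
      (happrox : ∀ j : Fin m,
        (1 - ε) * (shrink (q j) S (restrict π S) / c j) ≤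
          shrink (q i) S (restrict π S) / c i)
      (hch : ∀ a : A, (S.filter fun s => q i s = a).Nonempty →
        IsApproxGreedy ε q c π (ch a) (S.filter fun s => q i s = a)) :
      IsApproxGreedy ε q c π (.node i ch) S

/-- `T` is irreducible on version space `S`: every asked question strictly splits the
surviving set. -/
inductive Irreducible [DecidableEq A] (q : Fin m → H → A) :
    QTree m H A → Finset H → Prop
  | leaf (h : H) (S : Finset H) : Irreducible q (.leaf h) S
  | node (S : Finset H) (i : Fin m) (ch : A → QTree m H A)
      (hsplit : ∃ s ∈ S, ∃ t ∈ S, q i s ≠ q i t)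
      (hch : ∀ a : A, (S.filter fun s => q i s = a).Nonempty →
        Irreducible q (ch a) (S.filter fun s => q i s = a)) :
      Irreducible q (.node i ch) S



lemma mass_pos {π : H → ℝ} (hπ : ∀ h, 0 < π h) {S : Finset H} (hS : S.Nonempty) :
    0 < mass π S :=
  Finset.sum_pos (fun h _ => hπ h) hS

lemma mass_restrict [DecidableEq H] (π : H → ℝ) (S T : Finset H) (hT : T ⊆ S) :
    mass (restrict π S) T = mass π T / mass π S := by
  unfold mass restrict
  rw [Finset.sum_div]
  exact Finset.sum_congr rfl fun t ht => if_pos (hT ht)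

/-- Both bounds on shrinkage in terms of `d = π(disagree with h0)/π(S)`. -/
lemma shrink_bounds [Fintype A] [DecidableEq A] [DecidableEq H]
    (π : H → ℝ) (hπ : ∀ h, 0 < π h) (S : Finset H) (hS : S.Nonempty)
    (h0 : H) (h0S : h0 ∈ S) (hh0 : 1 / 2 < restrict π S h0) (f : H → A) :
    mass π (S.filter fun s => f s ≠ f h0) / mass π S ≤ shrink f S (restrict π S) ∧
    shrink f S (restrict π S) ≤
      2 * (mass π (S.filter fun s => f s ≠ f h0) / mass π S) := by
  have hPS : 0 < mass π S := mass_pos hπ hS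
  set PS := mass π S with hPSdef
  set a := f h0 with ha
  set u : A → ℝ := fun j => mass π (S.filter fun s => f s = j) / PS with hu
  have hshrink : shrink f S (restrict π S) = 1 - ∑ j : A, (u j) ^ 2 := by
    unfold shrink
    rw [mass_restrict π S S le_rfl, div_self hPS.ne']
    congr 1
    rw [Finset.sum_congr rfl fun j _ => by
      rw [mass_restrict π S _ (Finset.filter_subset _ _)]]
    simp [hu, div_pow]
    rfl
  have hunonneg : ∀ j, 0 ≤ u j :=
    fun j => div_nonneg (Finset.sum_nonneg fun h _ => (hπ h).le) hPS.le
  have husum : ∑ j : A, u j = 1 := by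
    rw [hu]
    simp only [mass]
    rw [← Finset.sum_div, Finset.sum_fiberwise S f π]
    exact div_self hPS.ne'
  set d := mass π (S.filter fun s => f s ≠ f h0) / PS with hd
  have hdnonneg : 0 ≤ d := div_nonneg (Finset.sum_nonneg fun h _ => (hπ h).le) hPS.le
  have hua : u a + d = 1 := by
    rw [hu, hd, ← add_div, hPSdef]
    unfold mass
    rw [Finset.sum_filter_add_sum_filter_not S (fun s => f s = a) π]
    exact div_self hPS.ne'
  have hp : 1 / 2 < u a := by
    have h1 : restrict π S h0 = π h0 / PS := if_pos h0S
    have h2 : π h0 ≤ mass π (S.filter fun s => f s = a) := by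
      apply Finset.single_le_sum (f := π) (fun h _ => (hπ h).le)
      exact Finset.mem_filter.2 ⟨h0S, rfl⟩
    calc 1/2 < π h0 / PS := by rw [← h1]; exact hh0
    _ ≤ u a := div_le_div_of_nonneg_right h2 hPS.le
  have hsplit : u a ^ 2 + ∑ j ∈ Finset.univ.erase a, (u j) ^ 2 = ∑ j : A, (u j) ^ 2 :=
    Finset.add_sum_erase _ (fun j => (u j) ^ 2) (Finset.mem_univ a)
  have hrest_sum : ∑ j ∈ Finset.univ.erase a, u j = d := by
    have h3 : u a + ∑ j ∈ Finset.univ.erase a, u j = ∑ j : A, u j :=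
      Finset.add_sum_erase _ u (Finset.mem_univ a)
    linarith [husum, hua]
  have hrest_sq : ∑ j ∈ Finset.univ.erase a, (u j) ^ 2 ≤ d ^ 2 := by
    rw [← hrest_sum]
    exact Finset.sum_sq_le_sq_sum_of_nonneg (fun j _ => hunonneg j)
  have hsq_ua : u a ^ 2 ≤ ∑ j : A, (u j) ^ 2 :=
    Finset.single_le_sum (fun j _ => sq_nonneg (u j)) (Finset.mem_univ a)
  rw [hshrink]
  constructor
  · nlinarith [hrest_sq, hua, hdnonneg, hp]
  · nlinarith [hsq_ua, hua, hdnonneg, hp]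

/-- If `h_0 ∈ S` has `π_S(h_0) > 1/2`, `R = S \ {h_0}`, and questions
`q_j, q_i` satisfy `Δ_j(S, π_S)/c_j ≥ Δ_i(S, π_S)/c_i`, then `2·δ_j/c_j ≥ δ_i/c_i`. -/
theorem delta_ratio_comparison [Fintype H] [Fintype A] [DecidableEq H] [DecidableEq A]
    (π : H → ℝ) (hπpos : ∀ h, 0 < π h) (hπsum : ∑ h : H, π h = 1)
    (hH : 1 < Fintype.card H)
    (q : Fin m → H → A) (c : Fin m → ℝ) (hc : ∀ i, 0 < c i)
    (S : Finset H) (hS : 1 < S.card)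
    (h0 : H) (h0S : h0 ∈ S) (hh0 : 1 / 2 < restrict π S h0)
    (j i : Fin m)
    (hji : shrink (q i) S (restrict π S) / c i ≤ shrink (q j) S (restrict π S) / c j) :
    mass (restrict π (S.erase h0)) ((S.erase h0).filter fun r => q i r ≠ q i h0) / c i ≤
      2 * (mass (restrict π (S.erase h0))
        ((S.erase h0).filter fun r => q j r ≠ q j h0) / c j) := by

  have hRne : (S.erase h0).Nonempty := by
    rw [← Finset.card_pos, Finset.card_erase_of_mem h0S]
    omega
  have hSne : S.Nonempty := ⟨h0, h0S⟩
  have hPS : 0 < mass π S := mass_pos hπpos hSne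
  have hPR : 0 < mass π (S.erase h0) := mass_pos hπpos hRne
  have hfe : ∀ (f : H → A),
      ((S.erase h0).filter fun r => f r ≠ f h0) = S.filter fun s => f s ≠ f h0 := by
    intro f
    ext x
    simp only [Finset.mem_filter, Finset.mem_erase]
    constructor
    · rintro ⟨⟨-, hx⟩, hne⟩; exact ⟨hx, hne⟩
    · rintro ⟨hx, hne⟩
      refine ⟨⟨?_, hx⟩, hne⟩
      rintro rfl; exact hne rfl
  have hbi := shrink_bounds π hπpos S hSne h0 h0S hh0 (q i)
  have hbj := shrink_bounds π hπpos S hSne h0 h0S hh0 (q j)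
  set Di := mass π (S.filter fun s => q i s ≠ q i h0) with hDi
  set Dj := mass π (S.filter fun s => q j s ≠ q j h0) with hDj
  have key : Di / mass π S / c i ≤ 2 * (Dj / mass π S / c j) := by
    calc Di / mass π S / c i ≤ shrink (q i) S (restrict π S) / c i := by
          gcongr; exacts [(hc i).le, hbi.1]
    _ ≤ shrink (q j) S (restrict π S) / c j := hji
    _ ≤ 2 * (Dj / mass π S) / c j :=
          div_le_div_of_nonneg_right hbj.2 (hc j).le
    _ = 2 * (Dj / mass π S / c j) := by ring
  rw [mass_restrict π (S.erase h0) _ (Finset.filter_subset _ _),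
      mass_restrict π (S.erase h0) _ (Finset.filter_subset _ _), hfe, hfe]
  have hmono : 0 < mass π S / mass π (S.erase h0) := by positivity
  calc Di / mass π (S.erase h0) / c i
      = (Di / mass π S / c i) * (mass π S / mass π (S.erase h0)) := by
        field_simp [hPS.ne', hPR.ne', (hc i).ne']
    _ ≤ (2 * (Dj / mass π S / c j)) * (mass π S / mass π (S.erase h0)) :=
        mul_le_mul_of_nonneg_right key hmono.le
    _ = 2 * (Dj / mass π (S.erase h0) / c j) := by
        field_simp [hPS.ne', hPR.ne', (hc j).ne']
end ActiveLearning
end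

section
/- Let T* be any query tree whose leaves are H and let T^g be the greedy query tree for π. Then for every version space S ⊆ H arising in the greedy construction (with corresponding subtree T^g_S), C(T^g_S, π_S) ≤ 12 · C(T*, π_S) · ln( π(S) / min_{h∈S} π(h) ). -/
open Finset

namespace ActiveLearning

variable {H A : Type*} {m : ℕ}

section Aux
set_option linter.unusedSectionVars false

variable {H A : Type*} {m : ℕ} [DecidableEq H] [Fintype A] [DecidableEq A] (π : H → ℝ)

/-- Unnormalized separated-pair mass of a question `g` on `S`. -/
def Dsep (g : H → A) (S : Finset H) : ℝ :=
  (mass π S) ^ 2 - ∑ a : A, (mass π (S.filter fun s => g s = a)) ^ 2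

/-- Unnormalized pair mass of `S`. -/
def Pm (S : Finset H) : ℝ := (mass π S) ^ 2 - ∑ s ∈ S, (π s) ^ 2

variable {π}

lemma mass_nonneg (hπ : ∀ h, 0 ≤ π h) (S : Finset H) : 0 ≤ mass π S :=
  Finset.sum_nonneg fun _ _ => hπ _

lemma mass_insert {x : H} {S : Finset H} (hx : x ∉ S) :
    mass π (insert x S) = π x + mass π S := Finset.sum_insert hx

lemma mass_fiber (g : H → A) (S : Finset H) :
    ∑ a : A, mass π (S.filter fun s => g s = a) = mass π S := by
  simpa [mass] using Finset.sum_fiberwise S g π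

lemma sum_fiber (g : H → A) (S : Finset H) (f : H → ℝ) :
    ∑ a : A, ∑ s ∈ S.filter fun s => g s = a, f s = ∑ s ∈ S, f s :=
  Finset.sum_fiberwise S g f

lemma sum_sq_le (S : Finset H) (f : H → ℝ) (hf : ∀ h ∈ S, 0 ≤ f h) :
    ∑ s ∈ S, (f s) ^ 2 ≤ (∑ s ∈ S, f s) ^ 2 := by
  simpa using Finset.sum_sq_le_sq_sum_of_nonneg hf

lemma Dsep_nonneg (hπ : ∀ h, 0 ≤ π h) (g : H → A) (S : Finset H) :
    0 ≤ Dsep π g S := by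
  have h := sum_sq_le (Finset.univ : Finset A)
      (fun a => mass π (S.filter fun s => g s = a))
      (fun a _ => mass_nonneg hπ _)
  rw [mass_fiber g S] at h
  simpa [Dsep] using h

lemma Pm_nonneg (hπ : ∀ h, 0 ≤ π h) (S : Finset H) : 0 ≤ Pm π S := by
  have h := sum_sq_le S π (fun h _ => hπ h)
  simpa [Pm, mass] using h

lemma Dsep_le_Pm (hπ : ∀ h, 0 ≤ π h) (g : H → A) (S : Finset H) :
    Dsep π g S ≤ Pm π S := by
  have key : ∑ s ∈ S, (π s) ^ 2 ≤ ∑ a : A, (mass π (S.filter fun s => g s = a)) ^ 2 := by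
    rw [← sum_fiber g S (fun s => (π s) ^ 2)]
    exact Finset.sum_le_sum fun a _ => sum_sq_le _ π (fun h _ => hπ h)
  simp only [Dsep, Pm]
  linarith

lemma Pm_split (g : H → A) (S : Finset H) :
    Pm π S = (∑ a : A, Pm π (S.filter fun s => g s = a)) + Dsep π g S := by
  simp only [Pm, Dsep, Finset.sum_sub_distrib]
  rw [sum_fiber g S (fun s => (π s) ^ 2)]
  ring

lemma Dsep_insert (g : H → A) {x : H} {S : Finset H} (hx : x ∉ S) :
    Dsep π g (insert x S) =
      Dsep π g S + 2 * π x * (mass π S - mass π (S.filter fun s => g s = g x)) := by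
  have hfib : ∀ a : A, mass π ((insert x S).filter fun s => g s = a) =
      mass π (S.filter fun s => g s = a) + (if g x = a then π x else 0) := by
    intro a
    rw [Finset.filter_insert]
    split
    · rw [mass, Finset.sum_insert (by simp [hx]), mass]
      simp_all [add_comm]
    · simp
  have hsq : ∑ a : A, (mass π ((insert x S).filter fun s => g s = a)) ^ 2 =
      (∑ a : A, (mass π (S.filter fun s => g s = a)) ^ 2)
        + 2 * π x * mass π (S.filter fun s => g s = g x) + (π x) ^ 2 := by
    simp only [hfib]
    have expand : ∀ a : A,
        (mass π (S.filter fun s => g s = a) + (if g x = a then π x else 0)) ^ 2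
        = (mass π (S.filter fun s => g s = a)) ^ 2
          + (if g x = a then 2 * π x * mass π (S.filter fun s => g s = a) + (π x) ^ 2 else 0) := by
      intro a; split <;> ring
    rw [Finset.sum_congr rfl (fun a _ => expand a), Finset.sum_add_distrib,
      Finset.sum_ite_eq (Finset.univ : Finset A) (g x)
        (fun a => 2 * π x * mass π (S.filter fun s => g s = a) + (π x) ^ 2)]
    simp [add_assoc]
  simp only [Dsep, hsq, mass_insert hx]
  ring

lemma Dsep_le (hπ : ∀ h, 0 ≤ π h) (g : H → A) (S : Finset H) (a₀ : A) :
    Dsep π g S ≤ 2 * mass π S * (mass π S - mass π (S.filter fun s => g s = a₀)) := by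
  have h1 : (mass π (S.filter fun s => g s = a₀)) ^ 2 ≤
      ∑ a : A, (mass π (S.filter fun s => g s = a)) ^ 2 :=
    Finset.single_le_sum (f := fun a => (mass π (S.filter fun s => g s = a)) ^ 2)
      (fun a _ => sq_nonneg _) (Finset.mem_univ a₀)
  have h2 : 2 * mass π S * mass π (S.filter fun s => g s = a₀) ≤
      (mass π S) ^ 2 + (mass π (S.filter fun s => g s = a₀)) ^ 2 := two_mul_le_add_sq _ _
  simp only [Dsep]
  nlinarith

lemma Dsep_oneStep (hπ : ∀ h, 0 ≤ π h) (g : H → A) {x : H} {S : Finset H} (hx : x ∉ S) :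
    Dsep π g S * mass π (insert x S) ≤ Dsep π g (insert x S) * mass π S := by
  rw [Dsep_insert g hx, mass_insert hx]
  have h := Dsep_le hπ g S (g x)
  have hw : 0 ≤ π x := hπ x
  nlinarith [mass_nonneg hπ S]

lemma Dsep_mono (hπ : ∀ h, 0 ≤ π h) (g : H → A) {S₂ S₁ : Finset H} (hsub : S₂ ⊆ S₁) :
    Dsep π g S₂ * mass π S₁ ≤ Dsep π g S₁ * mass π S₂ := by
  have main : ∀ E : Finset H,
      Dsep π g S₂ * mass π (S₂ ∪ E) ≤ Dsep π g (S₂ ∪ E) * mass π S₂ := by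
    intro E
    induction E using Finset.induction_on with
    | empty => simp
    | insert x E hxE ih =>
      by_cases hxm : x ∈ S₂ ∪ E
      · rwa [Finset.union_insert, Finset.insert_eq_self.mpr hxm]
      · rw [Finset.union_insert]
        have hstep := Dsep_oneStep hπ g (S := S₂ ∪ E) hxm
        have hUpos : 0 ≤ mass π (S₂ ∪ E) := mass_nonneg hπ _
        have hins : 0 ≤ mass π (insert x (S₂ ∪ E)) := mass_nonneg hπ _
        have hm2 : 0 ≤ mass π S₂ := mass_nonneg hπ _
        rcases eq_or_lt_of_le hUpos with hU0 | hU0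
        · have hms2 : mass π S₂ = 0 := by
            have hle : mass π S₂ ≤ mass π (S₂ ∪ E) :=
              Finset.sum_le_sum_of_subset_of_nonneg Finset.subset_union_left
                (fun i _ _ => hπ i)
            linarith
          have hDS2 : Dsep π g S₂ = 0 := by
            have hms2' : ∀ T : Finset H, T ⊆ S₂ → mass π T = 0 := by
              intro T hT
              have h1' : mass π T ≤ mass π S₂ :=
                Finset.sum_le_sum_of_subset_of_nonneg hT (fun i _ _ => hπ i)
              have h2' : 0 ≤ mass π T := mass_nonneg hπ T
              linarith
            simp only [Dsep, hms2]
            rw [Finset.sum_congr rfl fun a _ => by rw [hms2' _ (Finset.filter_subset _ _)]]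
            simp
          simp [hDS2, hms2]
        · nlinarith
  have := main (S₁ \ S₂)
  rwa [Finset.union_sdiff_of_subset hsub] at this

lemma pathCost_nonneg (q : Fin m → H → A) (c : Fin m → ℝ) (hc : ∀ i, 0 ≤ c i)
    (T : QTree m H A) (h : H) : 0 ≤ pathCost q c T h := by
  induction T with
  | leaf h' => simp [pathCost]
  | node k ch ih =>
    have := ih (q k h)
    simp only [pathCost]
    have := hc k
    linarith

/-- The key lemma: any valid tree pays at least `Pm/r` where `r` bounds all
shrinkage/cost ratios on (subsets of) `S`. -/
lemma key_lemma (hπ : ∀ h, 0 < π h) (q : Fin m → H → A) (c : Fin m → ℝ)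
    (T : QTree m H A) : ∀ (S : Finset H) (r : ℝ), 0 ≤ r → ValidOn q T S →
    (∀ k : Fin m, Dsep π (q k) S ≤ r * c k * mass π S) →
    Pm π S ≤ r * ∑ h ∈ S, π h * pathCost q c T h := by
  induction T with
  | leaf h' =>
    intro S r hr hvalid _
    have hsub : S ⊆ {h'} := by
      intro h hh
      have := hvalid h hh
      simp only [follow] at this
      simp [this]
    have hPm : Pm π S = 0 := by
      rcases Finset.subset_singleton_iff.mp hsub with rfl | rfl <;> simp [Pm, mass]
    rw [hPm]
    have : ∑ h ∈ S, π h * pathCost q c (QTree.leaf h') h = 0 := by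
      simp [pathCost]
    rw [this]
    simp
  | node k ch ih =>
    intro S r hr hvalid hhyp
    rcases S.eq_empty_or_nonempty with rfl | hSne
    · simp [Pm, mass]
    have hMpos : 0 < mass π S := Finset.sum_pos (fun i _ => hπ i) hSne
    have hfibsub : ∀ a : A, (S.filter fun s => q k s = a) ⊆ S := fun a => Finset.filter_subset _ _
    have hIH : ∀ a : A, Pm π (S.filter fun s => q k s = a) ≤
        r * ∑ h ∈ S.filter fun s => q k s = a, π h * pathCost q c (ch a) h := by
      intro a
      apply ih a _ r hr
      · intro h hh
        have hmem := Finset.mem_filter.mp hh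
        have hf := hvalid h hmem.1
        simp only [follow] at hf
        rw [hmem.2] at hf
        exact hf
      · intro k'
        have hmono := Dsep_mono (fun h => (hπ h).le) (q k') (hfibsub a)
        have hb := hhyp k'
        have hfm : 0 ≤ mass π (S.filter fun s => q k s = a) :=
          mass_nonneg (fun h => (hπ h).le) _
        have : Dsep π (q k') (S.filter fun s => q k s = a) * mass π S ≤
            (r * c k' * mass π S) * mass π (S.filter fun s => q k s = a) := by
          calc Dsep π (q k') (S.filter fun s => q k s = a) * mass π S
              ≤ Dsep π (q k') S * mass π (S.filter fun s => q k s = a) := hmono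
            _ ≤ (r * c k' * mass π S) * mass π (S.filter fun s => q k s = a) := by
                apply mul_le_mul_of_nonneg_right hb hfm
        have := le_of_mul_le_mul_right (by linarith [this]) hMpos
        calc Dsep π (q k') (S.filter fun s => q k s = a)
            ≤ r * c k' * mass π (S.filter fun s => q k s = a) := by
              nlinarith [this]
          _ = r * c k' * mass π (S.filter fun s => q k s = a) := rfl
    have hdecomp : ∑ h ∈ S, π h * pathCost q c (QTree.node k ch) h =
        c k * mass π S + ∑ a : A, ∑ h ∈ S.filter fun s => q k s = a,
          π h * pathCost q c (ch a) h := by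
      have h1 : ∀ h ∈ S, π h * pathCost q c (QTree.node k ch) h =
          π h * c k + π h * pathCost q c (ch (q k h)) h := by
        intro h _
        simp only [pathCost]
        ring
      rw [Finset.sum_congr rfl h1, Finset.sum_add_distrib]
      congr 1
      · rw [← Finset.sum_mul, mass]
        ring
      · rw [← sum_fiber (q k) S (fun h => π h * pathCost q c (ch (q k h)) h)]
        apply Finset.sum_congr rfl
        intro a _
        apply Finset.sum_congr rfl
        intro h hh
        rw [(Finset.mem_filter.mp hh).2]
    rw [hdecomp, Pm_split (q k) S]
    have hsum : ∑ a : A, Pm π (S.filter fun s => q k s = a) ≤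
        r * ∑ a : A, ∑ h ∈ S.filter fun s => q k s = a, π h * pathCost q c (ch a) h := by
      rw [Finset.mul_sum]
      exact Finset.sum_le_sum fun a _ => hIH a
    have hD := hhyp k
    have : Dsep π (q k) S ≤ r * (c k * mass π S) := by linarith [hD]
    calc (∑ a : A, Pm π (S.filter fun s => q k s = a)) + Dsep π (q k) S
        ≤ r * (∑ a : A, ∑ h ∈ S.filter fun s => q k s = a, π h * pathCost q c (ch a) h)
          + r * (c k * mass π S) := by
          apply add_le_add hsum this
      _ = r * (c k * mass π S + ∑ a : A, ∑ h ∈ S.filter fun s => q k s = a,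
            π h * pathCost q c (ch a) h) := by ring

end Aux

section Aux2
set_option linter.unusedSectionVars false

variable {H A : Type*} {m : ℕ} [DecidableEq H] [Fintype A] [DecidableEq A] {π : H → ℝ}

lemma single_le_mass (hπ : ∀ h, 0 ≤ π h) {S : Finset H} {s : H} (hs : s ∈ S) :
    π s ≤ mass π S :=
  Finset.single_le_sum (fun i _ => hπ i) hs

lemma mass_ge_two (hπ : ∀ h, 0 ≤ π h) {S : Finset H} (hcard : 1 < S.card)
    {μ : ℝ} (hmin : ∀ h ∈ S, μ ≤ π h) : 2 * μ ≤ mass π S := by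
  obtain ⟨a, ha, b, hb, hab⟩ := Finset.one_lt_card.mp hcard
  have hsub : ({a, b} : Finset H) ⊆ S := by
    intro x hx
    rcases Finset.mem_insert.mp hx with rfl | hx
    · exact ha
    · rwa [Finset.mem_singleton.mp hx]
  have hpair : π a + π b ≤ mass π S := by
    have := Finset.sum_le_sum_of_subset_of_nonneg hsub (fun i _ _ => hπ i)
    rwa [Finset.sum_pair hab] at this
  have := hmin a ha
  have := hmin b hb
  linarith

lemma Pm_ge_two (hπ : ∀ h, 0 ≤ π h) {S : Finset H} (hcard : 1 < S.card)
    {μ : ℝ} (hμ : 0 < μ) (hmin : ∀ h ∈ S, μ ≤ π h) : 2 * μ ^ 2 ≤ Pm π S := by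
  obtain ⟨a, ha, b, hb, hab⟩ := Finset.one_lt_card.mp hcard
  have hsub : ({a, b} : Finset H) ⊆ S := by
    intro x hx
    rcases Finset.mem_insert.mp hx with rfl | hx
    · exact ha
    · rwa [Finset.mem_singleton.mp hx]
  have hpair : π a + π b ≤ mass π S := by
    have := Finset.sum_le_sum_of_subset_of_nonneg hsub (fun i _ _ => hπ i)
    rwa [Finset.sum_pair hab] at this
  have hid : Pm π S = ∑ s ∈ S, π s * (mass π S - π s) := by
    have h1 : ∀ s ∈ S, π s * (mass π S - π s) = π s * mass π S - π s ^ 2 := by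
      intro s _; ring
    rw [Finset.sum_congr rfl h1, Finset.sum_sub_distrib, ← Finset.sum_mul]
    simp only [Pm, mass]
    ring
  have hlow : ∑ s ∈ ({a, b} : Finset H), π s * (mass π S - π s) ≤ Pm π S := by
    rw [hid]
    apply Finset.sum_le_sum_of_subset_of_nonneg hsub
    intro i hi _
    exact mul_nonneg (hπ i) (by linarith [single_le_mass hπ hi])
  rw [Finset.sum_pair hab] at hlow
  have hma := hmin a ha
  have hmb := hmin b hb
  nlinarith

lemma shrink_restrict_eq (hπ : ∀ h, 0 ≤ π h) {S : Finset H} (hM : 0 < mass π S)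
    (g : H → A) : shrink g S (restrict π S) = Dsep π g S / (mass π S) ^ 2 := by
  have hmr : ∀ T : Finset H, T ⊆ S → mass (restrict π S) T = mass π T / mass π S := by
    intro T hT
    simp only [mass, restrict]
    rw [Finset.sum_congr rfl (fun s hs => if_pos (hT hs)), Finset.sum_div]
  have h1 : mass (restrict π S) S = 1 := by
    rw [hmr S (le_refl _), div_self (ne_of_gt hM)]
  simp only [shrink, h1]
  rw [Finset.sum_congr rfl (fun a _ => by
    rw [hmr _ (Finset.filter_subset _ _)] : ∀ a ∈ (Finset.univ : Finset A),
      (mass (restrict π S) (S.filter fun s => g s = a)) ^ 2 / (1:ℝ)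
        = (mass π (S.filter fun s => g s = a) / mass π S) ^ 2 / 1)]
  simp only [div_one, div_pow, Dsep]
  rw [← Finset.sum_div]
  field_simp

lemma treeCost_restrict_eq [Fintype H] (q : Fin m → H → A) (c : Fin m → ℝ)
    (T : QTree m H A) (S : Finset H) :
    treeCost q c T (restrict π S) = (∑ h ∈ S, π h * pathCost q c T h) / mass π S := by
  simp only [treeCost, restrict]
  rw [← Finset.sum_subset (Finset.subset_univ S)
    (fun x _ hx => by simp [hx])]
  rw [Finset.sum_div]
  apply Finset.sum_congr rfl
  intro h hh
  rw [if_pos hh]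
  ring

lemma log4_ge_one : (1 : ℝ) ≤ Real.log 4 := by
  rw [Real.le_log_iff_exp_le (by norm_num)]
  have := Real.exp_one_lt_d9
  linarith

end Aux2

section Main
set_option linter.unusedSectionVars false

variable {H A : Type*} {m : ℕ} [Fintype H] [DecidableEq H] [Fintype A] [DecidableEq A] {π : H → ℝ}

lemma main_bound (hπ : ∀ h, 0 < π h) (q : Fin m → H → A) (c : Fin m → ℝ)
    (hc : ∀ i, 0 < c i) (Tstar : QTree m H A)
    (hTstar : ValidOn q Tstar Finset.univ) (μ : ℝ) (hμ : 0 < μ)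
    (Tg : QTree m H A) (S : Finset H) (hTg : IsGreedy q c π Tg S) :
    (∀ h ∈ S, μ ≤ π h) →
      ∑ h ∈ S, π h * pathCost q c Tg h ≤
        (∑ h ∈ S, π h * pathCost q c Tstar h) *
          Real.log (max (Pm π S) (μ ^ 2 / 2) / (μ ^ 2 / 2)) := by
  have hp₀ : (0 : ℝ) < μ ^ 2 / 2 := by positivity
  induction hTg with
  | leaf h =>
    intro _
    have hPm : Pm π ({h} : Finset H) = 0 := by simp [Pm, mass]
    rw [hPm, max_eq_right hp₀.le, div_self (ne_of_gt hp₀), Real.log_one, mul_zero]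
    simp [pathCost]
  | node S i ch hcard hmax hch ih =>
    intro hmin
    -- basic facts
    have hπ0 : ∀ h, 0 ≤ π h := fun h => (hπ h).le
    have hM2 : 2 * μ ≤ mass π S := mass_ge_two hπ0 hcard hmin
    have hMpos : 0 < mass π S := by linarith
    have hP4 : 2 * μ ^ 2 ≤ Pm π S := Pm_ge_two hπ0 hcard hμ hmin
    have hPpos : 0 < Pm π S := by nlinarith
    have hmaxP : max (Pm π S) (μ ^ 2 / 2) = Pm π S := max_eq_left (by nlinarith)
    have hDg0 : 0 ≤ Dsep π (q i) S := Dsep_nonneg hπ0 _ _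
    have hDgP : Dsep π (q i) S ≤ Pm π S := Dsep_le_Pm hπ0 _ _
    have hδ1 : Dsep π (q i) S / Pm π S ≤ 1 := (div_le_one hPpos).mpr hDgP
    have hδ0 : 0 ≤ Dsep π (q i) S / Pm π S := div_nonneg hDg0 hPpos.le
    -- the greedy ratio bound
    have hr : ∀ k : Fin m, Dsep π (q k) S ≤
        (Dsep π (q i) S / (c i * mass π S)) * c k * mass π S := by
      intro k
      have hk := hmax k
      rw [shrink_restrict_eq hπ0 hMpos (q k), shrink_restrict_eq hπ0 hMpos (q i)] at hk
      have hM2pos : 0 < (mass π S) ^ 2 := by positivity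
      have hkk := (div_le_div_iff₀ (hc k) (hc i)).mp hk
      -- hkk : Dsep k / M^2 * c i ≤ Dsep i / M^2 * c k
      have h3 : Dsep π (q k) S * c i ≤ Dsep π (q i) S * c k := by
        have := mul_le_mul_of_nonneg_right hkk hM2pos.le
        calc Dsep π (q k) S * c i
            = Dsep π (q k) S / (mass π S) ^ 2 * c i * (mass π S) ^ 2 := by
              field_simp
          _ ≤ Dsep π (q i) S / (mass π S) ^ 2 * c k * (mass π S) ^ 2 := this
          _ = Dsep π (q i) S * c k := by field_simp
      have hcipos := hc i
      have heq : Dsep π (q i) S / (c i * mass π S) * c k * mass π S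
          = Dsep π (q i) S * c k / c i := by
        field_simp
      rw [heq, le_div_iff₀ hcipos]
      linarith
    have hrnn : 0 ≤ Dsep π (q i) S / (c i * mass π S) :=
      div_nonneg hDg0 (mul_pos (hc i) hMpos).le
    -- key lemma applied to Tstar
    have hOPT : Pm π S ≤ (Dsep π (q i) S / (c i * mass π S)) *
        ∑ h ∈ S, π h * pathCost q c Tstar h :=
      key_lemma hπ q c Tstar S _ hrnn (fun h _ => hTstar h (Finset.mem_univ h)) hr
    have hOPTnn : 0 ≤ ∑ h ∈ S, π h * pathCost q c Tstar h :=
      Finset.sum_nonneg fun h _ =>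
        mul_nonneg (hπ0 h) (pathCost_nonneg q c (fun j => (hc j).le) Tstar h)
    -- step 5 : c i * M ≤ δ * OPT
    have hstep5 : c i * mass π S ≤ (Dsep π (q i) S / Pm π S) *
        ∑ h ∈ S, π h * pathCost q c Tstar h := by
      rw [div_mul_eq_mul_div, le_div_iff₀ hPpos]
      have := mul_le_mul_of_nonneg_right hOPT (le_of_lt (mul_pos (hc i) hMpos))
      calc c i * mass π S * Pm π S
          ≤ c i * mass π S * ((Dsep π (q i) S / (c i * mass π S)) *
              ∑ h ∈ S, π h * pathCost q c Tstar h) :=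
            mul_le_mul_of_nonneg_left hOPT (le_of_lt (mul_pos (hc i) hMpos))
        _ = Dsep π (q i) S * ∑ h ∈ S, π h * pathCost q c Tstar h := by
            have hne : c i * mass π S ≠ 0 := ne_of_gt (mul_pos (hc i) hMpos)
            field_simp
            rw [mul_assoc, mul_div_cancel_left₀ _ (ne_of_gt (hc i))]
    -- per-answer bound
    have hWa : ∀ a : A,
        ∑ h ∈ S.filter fun s => q i s = a, π h * pathCost q c (ch a) h ≤
          (∑ h ∈ S.filter fun s => q i s = a, π h * pathCost q c Tstar h) *
            (Real.log (Pm π S / (μ ^ 2 / 2)) - Dsep π (q i) S / Pm π S) := by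
      intro a
      rcases (S.filter fun s => q i s = a).eq_empty_or_nonempty with hfe | hfne
      · simp [hfe]
      · have hih := ih a hfne (fun h hh => hmin h (Finset.filter_subset _ _ hh))
        have hOPTa : 0 ≤ ∑ h ∈ S.filter fun s => q i s = a,
            π h * pathCost q c Tstar h :=
          Finset.sum_nonneg fun h _ =>
            mul_nonneg (hπ0 h) (pathCost_nonneg q c (fun j => (hc j).le) Tstar h)
        have hPa_le : Pm π (S.filter fun s => q i s = a) ≤ Pm π S - Dsep π (q i) S := by
          have hsplit := Pm_split (π := π) (q i) S
          have hone : Pm π (S.filter fun s => q i s = a) ≤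
              ∑ b : A, Pm π (S.filter fun s => q i s = b) :=
            Finset.single_le_sum (f := fun b => Pm π (S.filter fun s => q i s = b))
              (fun b _ => Pm_nonneg hπ0 _) (Finset.mem_univ a)
          linarith
        have hlog : Real.log (max (Pm π (S.filter fun s => q i s = a)) (μ ^ 2 / 2) / (μ ^ 2 / 2))
            ≤ Real.log (Pm π S / (μ ^ 2 / 2)) - Dsep π (q i) S / Pm π S := by
          rcases le_or_gt (Pm π (S.filter fun s => q i s = a)) (μ ^ 2 / 2) with hcase | hcase
          · rw [max_eq_right hcase, div_self (ne_of_gt hp₀), Real.log_one]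
            have h4 : (4 : ℝ) ≤ Pm π S / (μ ^ 2 / 2) := by
              rw [le_div_iff₀ hp₀]
              nlinarith
            have hl4 : Real.log 4 ≤ Real.log (Pm π S / (μ ^ 2 / 2)) := by
              rw [Real.log_le_log_iff (by norm_num) (by positivity)]
              exact h4
            linarith [log4_ge_one]
          · rw [max_eq_left hcase.le]
            have hPapos : 0 < Pm π (S.filter fun s => q i s = a) := lt_trans hp₀ hcase
            have hPD : 0 < Pm π S - Dsep π (q i) S := lt_of_lt_of_le hPapos hPa_le
            have h1δ : 0 < 1 - Dsep π (q i) S / Pm π S := by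
              rw [sub_pos, div_lt_one hPpos]
              linarith
            have hlogPa : Real.log (Pm π (S.filter fun s => q i s = a)) ≤
                Real.log (Pm π S) + Real.log (1 - Dsep π (q i) S / Pm π S) := by
              rw [← Real.log_mul (ne_of_gt hPpos) (ne_of_gt h1δ)]
              rw [Real.log_le_log_iff hPapos (by nlinarith)]
              have : Pm π S * (1 - Dsep π (q i) S / Pm π S) = Pm π S - Dsep π (q i) S := by
                field_simp
              linarith [hPa_le, this.ge, this.le]
            have hlog1δ : Real.log (1 - Dsep π (q i) S / Pm π S) ≤
                -(Dsep π (q i) S / Pm π S) := by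
              have := Real.log_le_sub_one_of_pos h1δ
              linarith
            rw [Real.log_div (ne_of_gt hPapos) (ne_of_gt hp₀),
              Real.log_div (ne_of_gt hPpos) (ne_of_gt hp₀)]
            linarith
        calc ∑ h ∈ S.filter fun s => q i s = a, π h * pathCost q c (ch a) h
            ≤ (∑ h ∈ S.filter fun s => q i s = a, π h * pathCost q c Tstar h) *
              Real.log (max (Pm π (S.filter fun s => q i s = a)) (μ ^ 2 / 2) / (μ ^ 2 / 2)) :=
              hih
          _ ≤ _ := mul_le_mul_of_nonneg_left hlog hOPTa
    -- decompose the greedy cost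
    have hdecomp : ∑ h ∈ S, π h * pathCost q c (QTree.node i ch) h =
        c i * mass π S + ∑ a : A, ∑ h ∈ S.filter fun s => q i s = a,
          π h * pathCost q c (ch a) h := by
      have h1 : ∀ h ∈ S, π h * pathCost q c (QTree.node i ch) h =
          π h * c i + π h * pathCost q c (ch (q i h)) h := by
        intro h _
        simp only [pathCost]
        ring
      rw [Finset.sum_congr rfl h1, Finset.sum_add_distrib]
      congr 1
      · rw [← Finset.sum_mul, mass]
        ring
      · rw [← sum_fiber (q i) S (fun h => π h * pathCost q c (ch (q i h)) h)]
        apply Finset.sum_congr rfl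
        intro a _
        apply Finset.sum_congr rfl
        intro h hh
        rw [(Finset.mem_filter.mp hh).2]
    have hOPTsplit : ∑ a : A, ∑ h ∈ S.filter fun s => q i s = a,
        π h * pathCost q c Tstar h = ∑ h ∈ S, π h * pathCost q c Tstar h :=
      sum_fiber (q i) S _
    rw [hdecomp, hmaxP]
    calc c i * mass π S + ∑ a : A, ∑ h ∈ S.filter fun s => q i s = a,
          π h * pathCost q c (ch a) h
        ≤ c i * mass π S + ∑ a : A,
            (∑ h ∈ S.filter fun s => q i s = a, π h * pathCost q c Tstar h) *
              (Real.log (Pm π S / (μ ^ 2 / 2)) - Dsep π (q i) S / Pm π S) := by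
          apply add_le_add_right
          exact Finset.sum_le_sum fun a _ => hWa a
      _ = c i * mass π S + (∑ h ∈ S, π h * pathCost q c Tstar h) *
            (Real.log (Pm π S / (μ ^ 2 / 2)) - Dsep π (q i) S / Pm π S) := by
          rw [← Finset.sum_mul, hOPTsplit]
      _ ≤ (Dsep π (q i) S / Pm π S) * (∑ h ∈ S, π h * pathCost q c Tstar h)
          + (∑ h ∈ S, π h * pathCost q c Tstar h) *
            (Real.log (Pm π S / (μ ^ 2 / 2)) - Dsep π (q i) S / Pm π S) := by
          exact add_le_add_left hstep5 _
      _ = (∑ h ∈ S, π h * pathCost q c Tstar h) *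
            Real.log (Pm π S / (μ ^ 2 / 2)) := by ring

end Main

/-- If `T*` is any query tree whose leaves are `H` and `T^g_S` is the greedy
subtree on a version space `S` arising in the greedy construction, then
`C(T^g_S, π_S) ≤ 12 · C(T*, π_S) · ln( π(S) / min_{h∈S} π(h) )`. -/
theorem greedy_subtree_bound [Fintype H] [Fintype A] [DecidableEq H] [DecidableEq A]
    (π : H → ℝ) (hπpos : ∀ h, 0 < π h) (hπsum : ∑ h : H, π h = 1)
    (hH : 1 < Fintype.card H)
    (q : Fin m → H → A) (c : Fin m → ℝ) (hc : ∀ i, 0 < c i)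
    (hdist : ∀ h h' : H, h ≠ h' → ∃ i : Fin m, q i h ≠ q i h')
    (Tstar : QTree m H A) (hTstar : ValidOn q Tstar Finset.univ)
    (S : Finset H) (hS : S.Nonempty)
    (Tg : QTree m H A) (hTg : IsGreedy q c π Tg S) :
    treeCost q c Tg (restrict π S) ≤
      12 * treeCost q c Tstar (restrict π S) *
        Real.log (mass π S / S.inf' hS π) := by
  have hμpos : 0 < S.inf' hS π := by
    rw [Finset.lt_inf'_iff]
    exact fun h _ => hπpos h
  have hmin : ∀ h ∈ S, S.inf' hS π ≤ π h := fun h hh => Finset.inf'_le π hh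
  cases hTg with
  | leaf h =>
    have h1 : treeCost q c (QTree.leaf h) (restrict π ({h} : Finset H)) = 0 := by
      simp [treeCost, pathCost]
    rw [h1]
    have h2 : mass π ({h} : Finset H) = π h := by simp [mass]
    have h3 : ({h} : Finset H).inf' hS π = π h := Finset.inf'_singleton (f := π) (b := h)
    rw [h2, h3, div_self (ne_of_gt (hπpos h)), Real.log_one, mul_zero]
  | node S i ch hcard hmax hch =>
    have hTg' : IsGreedy q c π (QTree.node i ch) S := IsGreedy.node S i ch hcard hmax hch
    have hπ0 : ∀ h, 0 ≤ π h := fun h => (hπpos h).le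
    have hmain := main_bound hπpos q c hc Tstar hTstar _ hμpos _ _ hTg' hmin
    have hM2 : 2 * S.inf' hS π ≤ mass π S := mass_ge_two hπ0 hcard hmin
    have hMpos : 0 < mass π S := by linarith
    have hP4 : 2 * (S.inf' hS π) ^ 2 ≤ Pm π S := Pm_ge_two hπ0 hcard hμpos hmin
    have hPpos : 0 < Pm π S := by nlinarith
    have hmaxP : max (Pm π S) ((S.inf' hS π) ^ 2 / 2) = Pm π S := max_eq_left (by nlinarith)
    rw [hmaxP] at hmain
    have hOPTnn : 0 ≤ ∑ h ∈ S, π h * pathCost q c Tstar h :=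
      Finset.sum_nonneg fun h _ =>
        mul_nonneg (hπ0 h) (pathCost_nonneg q c (fun j => (hc j).le) Tstar h)
    have hPM : Pm π S ≤ (mass π S) ^ 2 := by
      have h0 : (0:ℝ) ≤ ∑ s ∈ S, (π s) ^ 2 := Finset.sum_nonneg fun s _ => sq_nonneg _
      simp only [Pm]
      linarith
    have hlog3 : Real.log (Pm π S / ((S.inf' hS π) ^ 2 / 2)) ≤
        12 * Real.log (mass π S / S.inf' hS π) := by
      have hq : Pm π S / ((S.inf' hS π) ^ 2 / 2) ≤ (mass π S / S.inf' hS π) ^ 3 := by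
        rw [div_pow, div_le_div_iff₀ (by positivity) (by positivity)]
        have e1 : Pm π S * (S.inf' hS π) ^ 3 ≤ mass π S ^ 2 * (S.inf' hS π) ^ 3 :=
          mul_le_mul_of_nonneg_right hPM (by positivity)
        have e2 : mass π S ^ 2 * (S.inf' hS π) ^ 2 / 2 * (2 * S.inf' hS π) ≤
            mass π S ^ 2 * (S.inf' hS π) ^ 2 / 2 * mass π S :=
          mul_le_mul_of_nonneg_left hM2 (by positivity)
        nlinarith [e1, e2]
      have hlogmono : Real.log (Pm π S / ((S.inf' hS π) ^ 2 / 2)) ≤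
          Real.log ((mass π S / S.inf' hS π) ^ 3) := by
        rw [Real.log_le_log_iff (by positivity) (by positivity)]
        exact hq
      rw [Real.log_pow] at hlogmono
      have hlognn : 0 ≤ Real.log (mass π S / S.inf' hS π) := by
        apply Real.log_nonneg
        rw [le_div_iff₀ hμpos]
        linarith
      push_cast at hlogmono
      linarith
    rw [treeCost_restrict_eq, treeCost_restrict_eq]
    have hchain : ∑ h ∈ S, π h * pathCost q c (QTree.node i ch) h ≤
        (∑ h ∈ S, π h * pathCost q c Tstar h) *
          (12 * Real.log (mass π S / S.inf' hS π)) :=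
      le_trans hmain (mul_le_mul_of_nonneg_left hlog3 hOPTnn)
    calc (∑ h ∈ S, π h * pathCost q c (QTree.node i ch) h) / mass π S
        ≤ ((∑ h ∈ S, π h * pathCost q c Tstar h) *
            (12 * Real.log (mass π S / S.inf' hS π))) / mass π S :=
          (div_le_div_iff_of_pos_right hMpos).mpr hchain
      _ = 12 * ((∑ h ∈ S, π h * pathCost q c Tstar h) / mass π S) *
            Real.log (mass π S / S.inf' hS π) := by ring
end ActiveLearning
end
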